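/- arXiv:2309.11388 — 2 statements merged into one kernel-verified Lean document; each statement's English description precedes it below -/
import Mathlib

section
/- Let f be monotone increasing on [0,ε] with a·x^r ≤ f(x) ≤ b·x^r on [0,ε], k₁ ≥ ... ≥ k_m > 0, and set d_C = (min_{1≤j≤m} (a·k_j − b·U_j)/(a·k_j + b·L_j))^{1/r}, where U_j = k_{j+1}+...+k_m and L_j = k₁+...+k_j. If d_C > 0 (i.e., a·k_j > b·U_j for all j), then for every x with 0 < x < min{ε, d_C} and every n ≥ 1, w_n(x) > ∑_{ℓ>n} w_ℓ(x); consequently E(w_n(x)) is homeomorphic to the Cantor set. -/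
open Set Finset

/-- `g m n = 1 + ((n-1) mod m)`: the index of the coefficient used in the `n`-th term. -/
def mgIdx (m n : ℕ) : ℕ := 1 + (n - 1) % m

/-- The `n`-th term (for `n ≥ 1`) of the generalized multigeometric series:
`w_n(x) = k_{g(n)} · f(x^⌊(m+n-1)/m⌋)`. -/
noncomputable def mgTerm (k : ℕ → ℝ) (f : ℝ → ℝ) (m n : ℕ) (x : ℝ) : ℝ :=
  k (mgIdx m n) * f (x ^ ((m + n - 1) / m))

/-- The achievement set (set of all subsums) of the series `∑_{n ≥ 1} z n`. -/
def subsums (z : ℕ → ℝ) : Set ℝ :=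
  {y | ∃ c : ℕ → Bool, HasSum (fun n => if c (n + 1) then z (n + 1) else 0) y}

/-- `K = k₁ + ⋯ + k_m`. -/
noncomputable def Ksum (k : ℕ → ℝ) (m : ℕ) : ℝ := ∑ i ∈ Finset.Icc 1 m, k i

/-- `U_j = k_{j+1} + ⋯ + k_m`. -/
noncomputable def Usum (k : ℕ → ℝ) (m j : ℕ) : ℝ := ∑ i ∈ Finset.Icc (j + 1) m, k i

/-- `L_j = k₁ + ⋯ + k_j`. -/
noncomputable def Lsum (k : ℕ → ℝ) (j : ℕ) : ℝ := ∑ i ∈ Finset.Icc 1 j, k i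


open Filter Topology


noncomputable def boolSum (z : ℕ → ℝ) (c : ℕ → Bool) : ℝ :=
  ∑' n, if c n then z (n + 1) else 0

section Kakeya
variable {z : ℕ → ℝ} (hpos : ∀ n, 1 ≤ n → 0 < z n) (hsum : Summable fun n => z (n + 1))

include hpos hsum

lemma boolSum_summable (c : ℕ → Bool) :
    Summable (fun n => if c n then z (n + 1) else 0) := by
  refine hsum.of_nonneg_of_le (fun n => ?_) (fun n => ?_)
  · split
    · exact (hpos _ (by omega)).le
    · exact le_rfl
  · split
    · exact le_rfl
    · exact (hpos _ (by omega)).le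

lemma subsums_eq_range : subsums z = Set.range (boolSum z) := by
  ext y
  constructor
  · rintro ⟨c, hc⟩
    exact ⟨fun n => c (n + 1), hc.tsum_eq.symm ▸ rfl⟩
  · rintro ⟨c, rfl⟩
    refine ⟨fun n => c (n - 1), ?_⟩
    have h : (fun n => if (fun n => c (n - 1)) (n + 1) then z (n + 1) else 0)
        = fun n => if c n then z (n + 1) else 0 := by
      funext n; simp
    rw [h]
    exact (boolSum_summable hpos hsum c).hasSum

lemma boolSum_lt (htail : ∀ n, 1 ≤ n → ∑' i, z (n + 1 + i) < z n)
    {c c' : ℕ → Bool} {n : ℕ} (hlt : ∀ i < n, c i = c' i)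
    (hc : c n = true) (hc' : c' n = false) : boolSum z c' < boolSum z c := by
  classical
  have hS := boolSum_summable hpos hsum (z := z)
  have key : ∀ d : ℕ → Bool, boolSum z d =
      (∑ i ∈ Finset.range n, if d i then z (i + 1) else 0) +
      ((if d n then z (n + 1) else 0) + ∑' i, if d (i + (n + 1)) then z (i + (n + 1) + 1) else 0) := by
    intro d
    have h1 := Summable.sum_add_tsum_nat_add (f := fun i => if d i then z (i+1) else 0) (n + 1) (hS d)
    rw [boolSum, ← h1, Finset.sum_range_succ, add_assoc]
  rw [key c, key c', hc, hc']
  have hsum' : Summable (fun i => z (i + (n + 1) + 1)) := by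
    have := (summable_nat_add_iff (f := fun n => z (n + 1)) (n + 1)).2 hsum
    exact this
  have htc' : (∑' i, (if c' (i + (n + 1)) then z (i + (n + 1) + 1) else 0)) ≤ ∑' i, z (i + (n + 1) + 1) := by
    refine Summable.tsum_le_tsum (fun i => ?_) ?_ hsum'
    · split <;> [exact le_rfl; exact (hpos _ (by omega)).le]
    · refine hsum'.of_nonneg_of_le (fun i => ?_) (fun i => ?_)
      · split <;> [exact (hpos _ (by omega)).le; exact le_rfl]
      · split <;> [exact le_rfl; exact (hpos _ (by omega)).le]
  have htc : (0:ℝ) ≤ ∑' i, (if c (i + (n + 1)) then z (i + (n + 1) + 1) else 0) :=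
    tsum_nonneg (fun i => by split <;> [exact (hpos _ (by omega)).le; exact le_rfl])
  have heqS : (∑ i ∈ Finset.range n, (if c i then z (i + 1) else 0))
      = ∑ i ∈ Finset.range n, (if c' i then z (i + 1) else 0) := by
    refine Finset.sum_congr rfl (fun i hi => ?_)
    rw [hlt i (Finset.mem_range.mp hi)]
  have htail' : (∑' i, z (i + (n + 1) + 1)) < z (n + 1) := by
    have h := htail (n + 1) (by omega)
    have : (∑' i, z (i + (n + 1) + 1)) = ∑' i, z (n + 1 + 1 + i) :=
      tsum_congr (fun i => by congr 1; omega)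
    rw [this]; exact h
  rw [heqS]
  have hmain : (0:ℝ) + ∑' i, (if c' (i + (n + 1)) then z (i + (n + 1) + 1) else 0)
      < z (n + 1) + ∑' i, (if c (i + (n + 1)) then z (i + (n + 1) + 1) else 0) := by
    calc (0:ℝ) + ∑' i, (if c' (i + (n + 1)) then z (i + (n + 1) + 1) else 0)
        ≤ ∑' i, z (i + (n + 1) + 1) := by rw [zero_add]; exact htc'
      _ < z (n + 1) := htail'
      _ ≤ z (n + 1) + ∑' i, (if c (i + (n + 1)) then z (i + (n + 1) + 1) else 0) := le_add_of_nonneg_right htc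
  norm_num
  linarith [hmain]

lemma boolSum_injective (htail : ∀ n, 1 ≤ n → ∑' i, z (n + 1 + i) < z n) :
    Function.Injective (boolSum z) := by
  classical
  intro c c' h
  by_contra hne
  have hex : ∃ n, c n ≠ c' n := Function.ne_iff.mp hne
  set n := Nat.find hex with hn
  have hspec : c n ≠ c' n := Nat.find_spec hex
  have hlt : ∀ i < n, c i = c' i := fun i hi => not_not.mp (Nat.find_min hex hi)
  cases hcn : c n <;> cases hc'n : c' n
  · exact hspec (hcn.trans hc'n.symm)
  · have := boolSum_lt hpos hsum htail (fun i hi => (hlt i hi).symm) hc'n hcn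
    rw [h] at this; exact lt_irrefl _ this
  · have := boolSum_lt hpos hsum htail hlt hcn hc'n
    rw [h] at this; exact lt_irrefl _ this
  · exact hspec (hcn.trans hc'n.symm)

lemma boolSum_continuous : Continuous (boolSum z) := by
  have heq : boolSum z = fun c : ℕ → Bool =>
      ∑' n, (fun (n : ℕ) (c : ℕ → Bool) => if c n then z (n + 1) else 0) n c := rfl
  rw [heq]
  refine continuous_tsum (fun n => ?_) hsum (fun n c => ?_)
  · exact Continuous.comp (continuous_of_discreteTopology
      (f := fun b : Bool => if b then z (n + 1) else 0)) (continuous_apply n)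
  · rw [Real.norm_eq_abs]
    split
    · rw [abs_of_nonneg (hpos _ (by omega)).le]
    · rw [abs_zero]; exact (hpos _ (by omega)).le

lemma kakeya_homeo (htail : ∀ n, 1 ≤ n → ∑' i, z (n + 1 + i) < z n) :
    Nonempty ((ℕ → Bool) ≃ₜ (subsums z)) := by
  classical
  have hrange := subsums_eq_range hpos hsum
  have hmem : ∀ c, boolSum z c ∈ subsums z := by
    intro c; rw [hrange]; exact Set.mem_range_self c
  let e : (ℕ → Bool) ≃ subsums z :=
    Equiv.ofBijective (fun c => ⟨boolSum z c, hmem c⟩)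
      ⟨fun c c' hcc => boolSum_injective hpos hsum htail (by simpa using congrArg Subtype.val hcc),
       by rintro ⟨y, hy⟩
          rw [hrange] at hy
          obtain ⟨c, hc⟩ := hy
          exact ⟨c, Subtype.ext hc⟩⟩
  exact ⟨Continuous.homeoOfEquivCompactToT2 (f := e)
    ((boolSum_continuous hpos hsum).subtype_mk _)⟩

end Kakeya



section Cantor

noncomputable def czt : ℕ → ℝ := fun n => 2 / 3 ^ n

lemma czt_pos : ∀ n, 1 ≤ n → 0 < czt n := fun n _ => by
  unfold czt; positivity

lemma czt_summable : Summable (fun n => czt (n + 1)) := by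
  have : (fun n => czt (n + 1)) = fun n : ℕ => (2/3 : ℝ) * (1/3) ^ n := by
    funext n; unfold czt
    rw [pow_succ, one_div_pow]
    field_simp
  rw [this]
  exact (summable_geometric_of_lt_one (by norm_num) (by norm_num)).mul_left _

lemma czt_tsum_geom (n : ℕ) : (∑' i : ℕ, czt (n + 1 + i)) = 1 / 3 ^ n := by
  have h1 : (fun i : ℕ => czt (n + 1 + i)) = fun i : ℕ => (2 / 3 ^ (n+1)) * (1/3) ^ i := by
    funext i; unfold czt
    rw [pow_add, one_div_pow]
    field_simp
  rw [h1, tsum_mul_left, tsum_geometric_of_lt_one (by norm_num) (by norm_num)]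
  rw [pow_succ]
  norm_num
  ring

lemma czt_tail (n : ℕ) (hn : 1 ≤ n) : (∑' i : ℕ, czt (n + 1 + i)) < czt n := by
  rw [czt_tsum_geom]
  unfold czt
  rw [div_lt_div_iff₀ (by positivity) (by positivity)]
  nlinarith [pow_pos (show (0:ℝ) < 3 by norm_num) n]

lemma boolSum_czt_summand_summable (c : ℕ → Bool) :
    Summable fun n => if c n then czt (n + 1) else 0 := by
  refine czt_summable.of_nonneg_of_le (fun n => ?_) (fun n => ?_)
  · split
    · exact (czt_pos _ (by omega)).le
    · exact le_rfl
  · split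
    · exact le_rfl
    · exact (czt_pos _ (by omega)).le

lemma boolSum_czt_nonneg (c : ℕ → Bool) : 0 ≤ boolSum czt c :=
  tsum_nonneg (fun n => by
    split
    · exact (czt_pos _ (by omega)).le
    · exact le_rfl)

lemma boolSum_czt_le_one (c : ℕ → Bool) : boolSum czt c ≤ 1 := by
  have h1 : boolSum czt c ≤ ∑' n : ℕ, czt (n + 1) := by
    refine Summable.tsum_le_tsum (fun n => ?_) (boolSum_czt_summand_summable c) czt_summable
    split
    · exact le_rfl
    · exact (czt_pos _ (by omega)).le
  have h2 : (∑' n : ℕ, czt (n + 1)) = 1 := by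
    have h := czt_tsum_geom 0
    norm_num at h
    calc (∑' n : ℕ, czt (n + 1)) = ∑' i : ℕ, czt (0 + 1 + i) :=
          tsum_congr (fun i => by congr 1; omega)
      _ = 1 := by rw [h]
  linarith

lemma boolSum_czt_rec (c : ℕ → Bool) :
    boolSum czt c = (if c 0 then (2:ℝ)/3 else 0) + boolSum czt (fun n => c (n + 1)) / 3 := by
  have h0 := Summable.tsum_eq_zero_add (boolSum_czt_summand_summable c)
  have h1 : (fun n : ℕ => if c (n + 1) then czt (n + 1 + 1) else 0)
      = fun n : ℕ => (1/3 : ℝ) * (if c (n + 1) then czt (n + 1) else 0) := by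
    funext n
    split
    · unfold czt; rw [pow_succ]; field_simp
    · simp
  unfold boolSum
  rw [h0, h1, tsum_mul_left]
  have : czt (0 + 1) = (2:ℝ)/3 := by unfold czt; norm_num
  rw [this]
  beta_reduce
  ring

lemma preCantorSet_subset_unit (N : ℕ) : preCantorSet N ⊆ Set.Icc 0 1 := by
  induction N with
  | zero => exact le_rfl
  | succ N ih =>
    rintro x (⟨y, hy, rfl⟩ | ⟨y, hy, rfl⟩)
    · obtain ⟨h0, h1⟩ := ih hy
      constructor <;> [linarith; linarith]
    · obtain ⟨h0, h1⟩ := ih hy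
      constructor <;> [linarith; linarith]

lemma boolSum_czt_mem_pre : ∀ N (c : ℕ → Bool), boolSum czt c ∈ preCantorSet N := by
  intro N
  induction N with
  | zero => exact fun c => ⟨boolSum_czt_nonneg c, boolSum_czt_le_one c⟩
  | succ N ih =>
    intro c
    rw [boolSum_czt_rec]
    cases hc : c 0
    · rw [if_neg (by simp), zero_add]
      exact Or.inl ⟨boolSum czt (fun n => c (n + 1)), ih _, rfl⟩
    · rw [if_pos rfl]
      refine Or.inr ⟨boolSum czt (fun n => c (n + 1)), ih _, ?_⟩
      show (2 + boolSum czt (fun n => c (n + 1))) / 3 = _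
      ring

lemma cantor_step {x : ℝ} (hx : x ∈ cantorSet) :
    (x ≤ 1/2 → 3 * x ∈ cantorSet) ∧ (1/2 < x → 3 * x - 2 ∈ cantorSet) := by
  have hmem : ∀ N, x ∈ preCantorSet N := fun N => Set.mem_iInter.mp hx N
  constructor
  · intro hle
    refine Set.mem_iInter.mpr (fun N => ?_)
    rcases hmem (N + 1) with ⟨y, hy, rfl⟩ | ⟨y, hy, rfl⟩
    · have : 3 * (y / 3) = y := by ring
      rw [this]; exact hy
    · obtain ⟨h0, _⟩ := preCantorSet_subset_unit N hy
      exfalso; linarith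
  · intro hlt
    refine Set.mem_iInter.mpr (fun N => ?_)
    rcases hmem (N + 1) with ⟨y, hy, rfl⟩ | ⟨y, hy, rfl⟩
    · obtain ⟨_, h1⟩ := preCantorSet_subset_unit N hy
      exfalso; linarith
    · have : 3 * ((2 + y) / 3) - 2 = y := by ring
      rw [this]; exact hy

noncomputable def cantorIter (x : ℝ) : ℕ → ℝ
  | 0 => x
  | (i + 1) => if 1/2 < cantorIter x i then 3 * cantorIter x i - 2 else 3 * cantorIter x i

lemma cantorIter_mem {x : ℝ} (hx : x ∈ cantorSet) : ∀ i, cantorIter x i ∈ cantorSet := by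
  intro i
  induction i with
  | zero => exact hx
  | succ i ih =>
    show (if 1/2 < cantorIter x i then 3 * cantorIter x i - 2 else 3 * cantorIter x i) ∈ cantorSet
    split
    · exact (cantor_step ih).2 (by assumption)
    · exact (cantor_step ih).1 (by linarith [not_lt.mp (by assumption : ¬ 1/2 < cantorIter x i)])

lemma cantorIter_partial {x : ℝ} : ∀ N : ℕ,
    (∑ i ∈ Finset.range N, if 1/2 < cantorIter x i then (2:ℝ)/3^(i+1) else 0)
      = x - cantorIter x N / 3 ^ N := by
  intro N
  induction N with
  | zero => simp [cantorIter]
  | succ N ih =>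
    rw [Finset.sum_range_succ, ih]
    have hstep : cantorIter x (N + 1)
        = if 1/2 < cantorIter x N then 3 * cantorIter x N - 2 else 3 * cantorIter x N := rfl
    split
    · rw [hstep, if_pos (by assumption)]
      rw [pow_succ]
      field_simp
      ring
    · rw [hstep, if_neg (by assumption)]
      rw [pow_succ]
      field_simp
      ring

lemma cantorSet_subset_subsums {x : ℝ} (hx : x ∈ cantorSet) :
    ∃ c : ℕ → Bool, HasSum (fun n => if c (n + 1) then czt (n + 1) else 0) x := by
  classical
  refine ⟨fun n => decide ((1:ℝ)/2 < cantorIter x (n - 1)), ?_⟩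
  have hfun : (fun n => if decide ((1:ℝ)/2 < cantorIter x (n + 1 - 1)) then czt (n + 1) else 0)
      = fun n => if 1/2 < cantorIter x n then (2:ℝ)/3^(n+1) else 0 := by
    funext n
    simp only [Nat.add_sub_cancel, decide_eq_true_eq]
    rfl
  show HasSum (fun n => if decide ((1:ℝ)/2 < cantorIter x (n + 1 - 1)) then czt (n + 1) else 0) x
  rw [hfun]
  -- it is summable
  have hsummand : Summable (fun n => if 1/2 < cantorIter x n then (2:ℝ)/3^(n+1) else 0) := by
    have := boolSum_czt_summand_summable (fun n => decide ((1:ℝ)/2 < cantorIter x n))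
    refine this.congr (fun n => ?_)
    simp only [decide_eq_true_eq]
    rfl
  have hten : Tendsto (fun N => ∑ i ∈ Finset.range N,
      if 1/2 < cantorIter x i then (2:ℝ)/3^(i+1) else 0) atTop (𝓝 x) := by
    have heq : (fun N => ∑ i ∈ Finset.range N,
        if 1/2 < cantorIter x i then (2:ℝ)/3^(i+1) else 0)
        = fun N => x - cantorIter x N / 3 ^ N := by
      funext N; exact cantorIter_partial N
    rw [heq]
    have h0 : Tendsto (fun N : ℕ => cantorIter x N / 3 ^ N) atTop (𝓝 0) := by
      have hb : ∀ N : ℕ, |cantorIter x N / 3 ^ N| ≤ (1/3 : ℝ) ^ N := by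
        intro N
        obtain ⟨h0, h1⟩ := cantorSet_subset_unitInterval (cantorIter_mem hx N)
        rw [abs_of_nonneg (by positivity)]
        rw [div_pow, one_pow, div_le_div_iff₀ (by positivity) (by positivity)]
        nlinarith [pow_pos (show (0:ℝ) < 3 by norm_num) N]
      have : Tendsto (fun N : ℕ => (1/3 : ℝ) ^ N) atTop (𝓝 0) :=
        tendsto_pow_atTop_nhds_zero_of_lt_one (by norm_num) (by norm_num)
      exact squeeze_zero_norm hb this
    have hc := (tendsto_const_nhds : Tendsto (fun _ : ℕ => x) atTop (𝓝 x)).sub h0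
    simpa using hc
  have := hsummand.hasSum.tendsto_sum_nat
  have hx_eq : (∑' n, if 1/2 < cantorIter x n then (2:ℝ)/3^(n+1) else 0) = x :=
    tendsto_nhds_unique this hten
  have hfin := hsummand.hasSum
  rwa [hx_eq] at hfin

end Cantor



lemma mgIdx_eq (m q v : ℕ) (hv : v < m) : mgIdx m (m * q + v + 1) = v + 1 := by
  unfold mgIdx
  have h1 : m * q + v + 1 - 1 = m * q + v := by omega
  rw [h1, Nat.mul_add_mod, Nat.mod_eq_of_lt hv]
  omega

lemma mgExp_eq (m q v : ℕ) (hm : 0 < m) (hv : v < m) :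
    (m + (m * q + v + 1) - 1) / m = q + 1 := by
  have h1 : m + (m * q + v + 1) - 1 = m * (q + 1) + v := by
    have : m * (q + 1) = m * q + m := by ring
    omega
  rw [h1, Nat.mul_add_div hm, Nat.div_eq_of_lt hv]

section MG

variable (f : ℝ → ℝ) (a b r ε : ℝ) (m : ℕ) (k : ℕ → ℝ) (x : ℝ)

set_option maxHeartbeats 1000000 in
theorem mg_key (ha : 0 < a) (hb : 0 < b) (hr : 0 < r)
    (hε : 0 < ε) (hε1 : ε < 1)
    (hf : ∀ x ∈ Set.Icc (0:ℝ) ε, a * x ^ r ≤ f x ∧ f x ≤ b * x ^ r)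
    (hm : 1 ≤ m)
    (hkmono : ∀ i j, 1 ≤ i → i ≤ j → j ≤ m → k j ≤ k i) (hkpos : 0 < k m)
    (hx0 : 0 < x) (hxε : x < ε)
    (ht : ∀ j, 1 ≤ j → j ≤ m → x ^ r * (a * k j + b * Lsum k j) < a * k j - b * Usum k m j)
    (n : ℕ) (hn : 1 ≤ n) :
    Summable (fun i => mgTerm k f m (n + 1 + i) x) ∧
      (∑' i, mgTerm k f m (n + 1 + i) x) < mgTerm k f m n x := by
  have hm0 : 0 < m := hm
  set t := x ^ r with htdef
  have ht0 : 0 < t := Real.rpow_pos_of_pos hx0 r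
  have hkpos' : ∀ i, 1 ≤ i → i ≤ m → 0 < k i :=
    fun i h1 h2 => lt_of_lt_of_le hkpos (hkmono i m h1 h2 le_rfl)
  have hLpos : ∀ j, 1 ≤ j → j ≤ m → 0 < Lsum k j := by
    intro j h1 h2
    refine Finset.sum_pos (fun i hi => ?_) ⟨1, by simp [Finset.mem_Icc]; omega⟩
    rw [Finset.mem_Icc] at hi
    exact hkpos' i hi.1 (le_trans hi.2 h2)
  have hUnonneg : ∀ j, 1 ≤ j → 0 ≤ Usum k m j := by
    intro j h1
    refine Finset.sum_nonneg (fun i hi => ?_)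
    rw [Finset.mem_Icc] at hi
    exact (hkpos' i (by omega) hi.2).le
  have hKpos : 0 < Ksum k m := hLpos m hm le_rfl
  have ht1 : t < 1 := by
    have h := ht m hm le_rfl
    have hU : Usum k m m = 0 := by
      unfold Usum
      rw [Finset.Icc_eq_empty (by omega), Finset.sum_empty]
    rw [hU] at h
    have hL := hLpos m hm le_rfl
    by_contra hcon
    push_neg at hcon
    have hA : (0:ℝ) < a * k m + b * Lsum k m := by
      have := mul_pos ha hkpos
      have := mul_pos hb hL
      linarith
    have h2 : 1 * (a * k m + b * Lsum k m) ≤ t * (a * k m + b * Lsum k m) :=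
      mul_le_mul_of_nonneg_right hcon hA.le
    have h3 := mul_pos hb hL
    nlinarith
  have h1t : 0 < 1 - t := by linarith
  -- term bounds
  have hxone : x < 1 := lt_trans hxε hε1
  have hbound : ∀ ℓ, 1 ≤ ℓ →
      a * (k (mgIdx m ℓ) * t ^ ((m + ℓ - 1) / m)) ≤ mgTerm k f m ℓ x ∧
      mgTerm k f m ℓ x ≤ b * (k (mgIdx m ℓ) * t ^ ((m + ℓ - 1) / m)) := by
    intro ℓ hℓ
    set e := (m + ℓ - 1) / m with hedef
    have he1 : 1 ≤ e := by
      rw [hedef]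
      rw [Nat.le_div_iff_mul_le hm0]
      omega
    have hxe : x ^ e ∈ Set.Icc (0:ℝ) ε := by
      constructor
      · positivity
      · calc x ^ e ≤ x ^ 1 := pow_le_pow_of_le_one hx0.le hxone.le he1
          _ = x := pow_one x
          _ ≤ ε := hxε.le
    have hpow : (x ^ e) ^ r = t ^ e := by
      rw [htdef]
      rw [← Real.rpow_natCast x e, ← Real.rpow_mul hx0.le, mul_comm,
        Real.rpow_mul hx0.le, Real.rpow_natCast]
    obtain ⟨hfl, hfu⟩ := hf (x ^ e) hxe
    have hidx := mgIdx
    have hg1 : 1 ≤ mgIdx m ℓ := by unfold mgIdx; omega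
    have hgm : mgIdx m ℓ ≤ m := by
      unfold mgIdx
      have := Nat.mod_lt (ℓ - 1) hm0
      omega
    have hknn : 0 ≤ k (mgIdx m ℓ) := (hkpos' _ hg1 hgm).le
    constructor
    · have h := mul_le_mul_of_nonneg_left hfl hknn
      calc a * (k (mgIdx m ℓ) * t ^ e) = k (mgIdx m ℓ) * (a * (x ^ e) ^ r) := by
            rw [hpow]; ring
        _ ≤ k (mgIdx m ℓ) * f (x ^ e) := h
        _ = mgTerm k f m ℓ x := rfl
    · have h := mul_le_mul_of_nonneg_left hfu hknn
      calc mgTerm k f m ℓ x = k (mgIdx m ℓ) * f (x ^ e) := rfl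
        _ ≤ k (mgIdx m ℓ) * (b * (x ^ e) ^ r) := h
        _ = b * (k (mgIdx m ℓ) * t ^ e) := by rw [hpow]; ring
  have hwpos : ∀ ℓ, 1 ≤ ℓ → 0 < mgTerm k f m ℓ x := by
    intro ℓ hℓ
    refine lt_of_lt_of_le ?_ (hbound ℓ hℓ).1
    have hg1 : 1 ≤ mgIdx m ℓ := by unfold mgIdx; omega
    have hgm : mgIdx m ℓ ≤ m := by
      unfold mgIdx
      have := Nat.mod_lt (ℓ - 1) hm0
      omega
    have := hkpos' _ hg1 hgm
    positivity
  -- block decomposition for n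
  set q := (n - 1) / m with hqdef
  set j := mgIdx m n with hjdef
  have hj1 : 1 ≤ j := by rw [hjdef]; unfold mgIdx; omega
  have hjm : j ≤ m := by
    rw [hjdef]; unfold mgIdx
    have := Nat.mod_lt (n - 1) hm0
    omega
  have hrepr : n = m * q + (j - 1) + 1 := by
    have h := Nat.div_add_mod (n - 1) m
    rw [hjdef]; unfold mgIdx
    rw [hqdef]
    omega
  set p := q + 1 with hpdef
  have hexp_n : (m + n - 1) / m = p := by
    have h := mgExp_eq m q (j - 1) hm0 (by omega)
    rw [← hrepr] at h
    exact h
  -- the bound constant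
  set C := b * (Usum k m j * t ^ p + Ksum k m * (t ^ (p + 1) * (1 - t)⁻¹)) with hCdef
  -- geometric partial sums
  have hgeom : ∀ M : ℕ, (∑ u ∈ Finset.range M, t ^ u) ≤ (1 - t)⁻¹ := by
    intro M
    have h := geom_sum_mul t M
    have hM : 0 ≤ t ^ M := by positivity
    rw [inv_eq_one_div, le_div_iff₀ h1t]
    nlinarith [h, hM]
  -- Usum as a range sum
  have hUrange : Usum k m j = ∑ i ∈ Finset.range (m - j), k (j + 1 + i) := by
    unfold Usum
    rw [← Finset.Ico_add_one_right_eq_Icc, Finset.sum_Ico_eq_sum_range]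
    have h : m + 1 - (j + 1) = m - j := by omega
    rw [h]
  have hKrange : Ksum k m = ∑ v ∈ Finset.range m, k (v + 1) := by
    unfold Ksum
    rw [← Finset.Ico_add_one_right_eq_Icc, Finset.sum_Ico_eq_sum_range]
    have h : m + 1 - 1 = m := by omega
    rw [h]
    exact Finset.sum_congr rfl (fun v _ => by rw [Nat.add_comm])
  -- in-block term bound
  have hinblock : ∀ i, i < m - j →
      mgTerm k f m (n + 1 + i) x ≤ b * (k (j + 1 + i) * t ^ p) := by
    intro i hi
    have hni : n + 1 + i = m * q + (j + i) + 1 := by omega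
    have hidx : mgIdx m (n + 1 + i) = j + i + 1 := by
      rw [hni]; exact mgIdx_eq m q (j + i) (by omega)
    have hexp : (m + (n + 1 + i) - 1) / m = p := by
      rw [hni, hpdef]; exact mgExp_eq m q (j + i) hm0 (by omega)
    have h := (hbound (n + 1 + i) (by omega)).2
    rw [hidx, hexp] at h
    have : j + i + 1 = j + 1 + i := by omega
    rw [this] at h
    exact h
  -- beyond-block term bound
  have hbeyond : ∀ i : ℕ,
      mgTerm k f m (p * m + 1 + i) x ≤ b * (k (i % m + 1) * t ^ (p + 1 + i / m)) := by
    intro i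
    have hmod := Nat.div_add_mod i m
    have hmodlt := Nat.mod_lt i hm0
    have hdist : m * (p + i / m) = m * p + m * (i / m) := by ring
    have hcomm : p * m = m * p := by ring
    have hni : p * m + 1 + i = m * (p + i / m) + i % m + 1 := by omega
    have hidx : mgIdx m (p * m + 1 + i) = i % m + 1 := by
      rw [hni]; exact mgIdx_eq m (p + i / m) (i % m) hmodlt
    have hexp : (m + (p * m + 1 + i) - 1) / m = p + 1 + i / m := by
      rw [hni]
      have := mgExp_eq m (p + i / m) (i % m) hm0 hmodlt
      rw [this]
      omega
    have h := (hbound (p * m + 1 + i) (by omega)).2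
    rw [hidx, hexp] at h
    exact h
  have hnm : n + (m - j) = p * m := by
    have : p * m = m * q + m := by rw [hpdef]; ring
    omega
  -- the inner dominating sum evaluation
  have hinner : ∀ M : ℕ, (∑ i ∈ Finset.range (M * m), k (i % m + 1) * t ^ (p + 1 + i / m))
      = (∑ u ∈ Finset.range M, t ^ (p + 1 + u)) * Ksum k m := by
    intro M
    induction M with
    | zero => simp
    | succ M ih =>
      have hMm : (M + 1) * m = M * m + m := by ring
      rw [hMm, Finset.sum_range_add, ih, Finset.sum_range_succ]
      have hterm : ∀ v ∈ Finset.range m,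
          k ((M * m + v) % m + 1) * t ^ (p + 1 + (M * m + v) / m)
            = t ^ (p + 1 + M) * k (v + 1) := by
        intro v hv
        rw [Finset.mem_range] at hv
        have e1 : (M * m + v) % m = v := by
          rw [Nat.add_comm, Nat.add_mul_mod_self_right, Nat.mod_eq_of_lt hv]
        have e2 : (M * m + v) / m = M := by
          rw [Nat.add_comm, Nat.add_mul_div_right _ _ hm0, Nat.div_eq_of_lt hv]
          omega
        rw [e1, e2]
        ring
      rw [Finset.sum_congr rfl hterm, ← Finset.mul_sum, ← hKrange]
      ring
  -- second-part partial sums bounded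
  have hsecond : ∀ N : ℕ, (∑ i ∈ Finset.range N, mgTerm k f m (p * m + 1 + i) x)
      ≤ b * (Ksum k m * (t ^ (p + 1) * (1 - t)⁻¹)) := by
    intro N
    have step1 : (∑ i ∈ Finset.range N, mgTerm k f m (p * m + 1 + i) x)
        ≤ ∑ i ∈ Finset.range N, b * (k (i % m + 1) * t ^ (p + 1 + i / m)) :=
      Finset.sum_le_sum (fun i _ => hbeyond i)
    have step2 : (∑ i ∈ Finset.range N, b * (k (i % m + 1) * t ^ (p + 1 + i / m)))
        ≤ ∑ i ∈ Finset.range (N * m), b * (k (i % m + 1) * t ^ (p + 1 + i / m)) := by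
      refine Finset.sum_le_sum_of_subset_of_nonneg
        (Finset.range_subset_range.mpr (Nat.le_mul_of_pos_right N hm0)) (fun i _ _ => ?_)
      have hg1 : 1 ≤ i % m + 1 := by omega
      have hgm : i % m + 1 ≤ m := by have := Nat.mod_lt i hm0; omega
      have := hkpos' _ hg1 hgm
      positivity
    have step3 : (∑ i ∈ Finset.range (N * m), b * (k (i % m + 1) * t ^ (p + 1 + i / m)))
        = b * ((∑ u ∈ Finset.range N, t ^ (p + 1 + u)) * Ksum k m) := by
      rw [← Finset.mul_sum, hinner]
    have step4 : (∑ u ∈ Finset.range N, t ^ (p + 1 + u)) ≤ t ^ (p + 1) * (1 - t)⁻¹ := by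
      have he : ∀ u ∈ Finset.range N, t ^ (p + 1 + u) = t ^ (p + 1) * t ^ u :=
        fun u _ => by rw [pow_add]
      rw [Finset.sum_congr rfl he, ← Finset.mul_sum]
      exact mul_le_mul_of_nonneg_left (hgeom N) (by positivity)
    calc (∑ i ∈ Finset.range N, mgTerm k f m (p * m + 1 + i) x)
        ≤ ∑ i ∈ Finset.range (N * m), b * (k (i % m + 1) * t ^ (p + 1 + i / m)) :=
          le_trans step1 step2
      _ = b * ((∑ u ∈ Finset.range N, t ^ (p + 1 + u)) * Ksum k m) := step3
      _ ≤ b * (Ksum k m * (t ^ (p + 1) * (1 - t)⁻¹)) := by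
          have h := mul_le_mul_of_nonneg_left step4 (mul_nonneg hb.le hKpos.le)
          nlinarith [h]
  -- full partial sums bounded by C
  have hpartial : ∀ N : ℕ, (∑ i ∈ Finset.range N, mgTerm k f m (n + 1 + i) x) ≤ C := by
    intro N
    have hC2nn : 0 ≤ b * (Ksum k m * (t ^ (p + 1) * (1 - t)⁻¹)) := by positivity
    have hfirst : ∀ N', N' ≤ m - j →
        (∑ i ∈ Finset.range N', mgTerm k f m (n + 1 + i) x) ≤ b * (Usum k m j * t ^ p) := by
      intro N' hN'
      calc (∑ i ∈ Finset.range N', mgTerm k f m (n + 1 + i) x)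
          ≤ ∑ i ∈ Finset.range N', b * (k (j + 1 + i) * t ^ p) :=
            Finset.sum_le_sum (fun i hi => hinblock i (by
              rw [Finset.mem_range] at hi; omega))
        _ ≤ ∑ i ∈ Finset.range (m - j), b * (k (j + 1 + i) * t ^ p) := by
            refine Finset.sum_le_sum_of_subset_of_nonneg
              (Finset.range_subset_range.mpr hN') (fun i hi _ => ?_)
            rw [Finset.mem_range] at hi
            have := hkpos' (j + 1 + i) (by omega) (by omega)
            positivity
        _ = b * (Usum k m j * t ^ p) := by
            rw [hUrange, Finset.sum_mul, ← Finset.mul_sum]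
    rcases le_or_gt N (m - j) with hN | hN
    · have h := hfirst N hN
      rw [hCdef]
      nlinarith [h, hC2nn]
    · have hsplit : N = (m - j) + (N - (m - j)) := by omega
      rw [hsplit, Finset.sum_range_add]
      have h1 := hfirst (m - j) le_rfl
      have h2 : (∑ i ∈ Finset.range (N - (m - j)), mgTerm k f m (n + 1 + (m - j + i)) x)
          ≤ b * (Ksum k m * (t ^ (p + 1) * (1 - t)⁻¹)) := by
        have heq : ∀ i, n + 1 + (m - j + i) = p * m + 1 + i := fun i => by omega
        calc (∑ i ∈ Finset.range (N - (m - j)), mgTerm k f m (n + 1 + (m - j + i)) x)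
            = ∑ i ∈ Finset.range (N - (m - j)), mgTerm k f m (p * m + 1 + i) x := by
              refine Finset.sum_congr rfl (fun i _ => by rw [heq i])
          _ ≤ _ := hsecond _
      rw [hCdef]
      nlinarith [h1, h2]
  have hnonneg : ∀ i : ℕ, 0 ≤ mgTerm k f m (n + 1 + i) x :=
    fun i => (hwpos (n + 1 + i) (by omega)).le
  have hsummable : Summable (fun i => mgTerm k f m (n + 1 + i) x) :=
    summable_of_sum_range_le hnonneg hpartial
  refine ⟨hsummable, ?_⟩
  have htsum : (∑' i, mgTerm k f m (n + 1 + i) x) ≤ C :=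
    Summable.tsum_le_of_sum_range_le hsummable hpartial
  -- C < mgTerm n
  have hlow : a * (k j * t ^ p) ≤ mgTerm k f m n x := by
    have h := (hbound n hn).1
    rw [hexp_n] at h
    rw [hjdef]
    exact h
  have hCstrict : C < a * (k j * t ^ p) := by
    have hj := ht j hj1 hjm
    have hKeq : Ksum k m = Lsum k j + Usum k m j := by
      unfold Ksum Lsum Usum
      rw [← Finset.sum_union]
      · congr 1
        rw [← Finset.Ico_add_one_right_eq_Icc, ← Finset.Ico_add_one_right_eq_Icc, ← Finset.Ico_add_one_right_eq_Icc]
        rw [Finset.Ico_union_Ico_eq_Ico (by omega) (by omega)]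
      · rw [Finset.disjoint_left]
        intro i hi1 hi2
        rw [Finset.mem_Icc] at hi1 hi2
        omega
    have hL := hLpos j hj1 hjm
    have hU := hUnonneg j hj1
    have hkj := hkpos' j hj1 hjm
    have htp : (0:ℝ) < t ^ p := by positivity
    -- reduce to the scalar inequality
    have hne : (1 - t) ≠ 0 := ne_of_gt h1t
    have hmul : (b * Usum k m j + b * Ksum k m * (t * (1 - t)⁻¹)) * (1 - t)
        < (a * k j) * (1 - t) := by
      have h2 : b * Ksum k m * (t * (1 - t)⁻¹) * (1 - t) = b * Ksum k m * t := by
        field_simp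
      have hexpand : (b * Usum k m j + b * Ksum k m * (t * (1 - t)⁻¹)) * (1 - t)
          = b * Usum k m j * (1 - t) + b * Ksum k m * t := by
        calc (b * Usum k m j + b * Ksum k m * (t * (1 - t)⁻¹)) * (1 - t)
            = b * Usum k m j * (1 - t) + b * Ksum k m * (t * (1 - t)⁻¹) * (1 - t) := by ring
          _ = b * Usum k m j * (1 - t) + b * Ksum k m * t := by rw [h2]
      rw [hexpand, hKeq]
      linarith [hj]
    have hscalar : b * Usum k m j + b * Ksum k m * (t * (1 - t)⁻¹) < a * k j :=
      (mul_lt_mul_iff_of_pos_right h1t).mp hmul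
    have hCform : C = (b * Usum k m j + b * Ksum k m * (t * (1 - t)⁻¹)) * t ^ p := by
      rw [hCdef, pow_succ]
      ring
    rw [hCform]
    calc (b * Usum k m j + b * Ksum k m * (t * (1 - t)⁻¹)) * t ^ p
        < (a * k j) * t ^ p := by
          exact mul_lt_mul_of_pos_right hscalar htp
      _ = a * (k j * t ^ p) := by ring
  linarith

theorem mgTerm_pos (ha : 0 < a) (hε1 : ε < 1)
    (hf : ∀ x ∈ Set.Icc (0:ℝ) ε, a * x ^ r ≤ f x ∧ f x ≤ b * x ^ r)
    (hm : 1 ≤ m)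
    (hkmono : ∀ i j, 1 ≤ i → i ≤ j → j ≤ m → k j ≤ k i) (hkpos : 0 < k m)
    (hx0 : 0 < x) (hxε : x < ε) (ℓ : ℕ) (hℓ : 1 ≤ ℓ) : 0 < mgTerm k f m ℓ x := by
  have hm0 : 0 < m := hm
  set e := (m + ℓ - 1) / m with hedef
  have he1 : 1 ≤ e := by
    rw [hedef, Nat.le_div_iff_mul_le hm0]
    omega
  have hxone : x < 1 := lt_trans hxε hε1
  have hxe : x ^ e ∈ Set.Icc (0:ℝ) ε := by
    constructor
    · positivity
    · calc x ^ e ≤ x ^ 1 := pow_le_pow_of_le_one hx0.le hxone.le he1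
        _ = x := pow_one x
        _ ≤ ε := hxε.le
  have hfl := (hf (x ^ e) hxe).1
  have hg1 : 1 ≤ mgIdx m ℓ := by unfold mgIdx; omega
  have hgm : mgIdx m ℓ ≤ m := by
    unfold mgIdx
    have := Nat.mod_lt (ℓ - 1) hm0
    omega
  have hkg : 0 < k (mgIdx m ℓ) := lt_of_lt_of_le hkpos (hkmono _ m hg1 hgm le_rfl)
  have hxer : 0 < (x ^ e) ^ r := Real.rpow_pos_of_pos (by positivity) r
  have hfpos : 0 < f (x ^ e) := lt_of_lt_of_le (by positivity) hfl
  exact mul_pos hkg hfpos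

end MG



lemma subsums_czt_eq_cantor : subsums czt = cantorSet := by
  ext y
  constructor
  · intro hy
    rw [subsums_eq_range czt_pos czt_summable] at hy
    obtain ⟨c, rfl⟩ := hy
    exact Set.mem_iInter.mpr (fun N => boolSum_czt_mem_pre N c)
  · intro hy
    exact cantorSet_subset_subsums hy

/-- For `0 < x < min{ε, d_C}` every term strictly exceeds its tail, hence the achievement
set is homeomorphic to the Cantor set. -/
theorem stmt_18 (f : ℝ → ℝ) (a b r ε : ℝ) (ha : 0 < a) (hb : 0 < b) (hr : 0 < r)
    (hε : 0 < ε) (hε1 : ε < 1)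
    (hmono : MonotoneOn f (Set.Icc 0 ε))
    (hf : ∀ x ∈ Set.Icc (0:ℝ) ε, a * x ^ r ≤ f x ∧ f x ≤ b * x ^ r)
    (m : ℕ) (hm : 1 ≤ m) (k : ℕ → ℝ)
    (hkmono : ∀ i j, 1 ≤ i → i ≤ j → j ≤ m → k j ≤ k i)
    (hkpos : 0 < k m)
    (dC : ℝ)
    (hdC : dC = ((Finset.Icc 1 m).inf' (Finset.nonempty_Icc.mpr hm)
        (fun j => (a * k j - b * Usum k m j) / (a * k j + b * Lsum k j))) ^ (1 / r))
    (hdCpos : ∀ j, 1 ≤ j → j ≤ m → b * Usum k m j < a * k j) :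
    ∀ x : ℝ, 0 < x → x < min ε dC →
      (∀ n : ℕ, 1 ≤ n →
        (∑' j : ℕ, mgTerm k f m (n + 1 + j) x) < mgTerm k f m n x) ∧
      Nonempty ((subsums fun n => mgTerm k f m n x) ≃ₜ cantorSet) := by
  intro x hx0 hxmin
  have hxε : x < ε := lt_of_lt_of_le hxmin (min_le_left _ _)
  have hxd : x < dC := lt_of_lt_of_le hxmin (min_le_right _ _)
  have hm0 : 0 < m := hm
  have hkpos' : ∀ i, 1 ≤ i → i ≤ m → 0 < k i :=
    fun i h1 h2 => lt_of_lt_of_le hkpos (hkmono i m h1 h2 le_rfl)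
  have hLpos : ∀ j, 1 ≤ j → j ≤ m → 0 < Lsum k j := by
    intro j h1 h2
    refine Finset.sum_pos (fun i hi => ?_) ⟨1, by simp [Finset.mem_Icc]; omega⟩
    rw [Finset.mem_Icc] at hi
    exact hkpos' i hi.1 (le_trans hi.2 h2)
  have hdenom : ∀ i, 1 ≤ i → i ≤ m → 0 < a * k i + b * Lsum k i := by
    intro i h1 h2
    have := mul_pos ha (hkpos' i h1 h2)
    have := mul_pos hb (hLpos i h1 h2)
    linarith
  set D := ((Finset.Icc 1 m).inf' (Finset.nonempty_Icc.mpr hm)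
      (fun j => (a * k j - b * Usum k m j) / (a * k j + b * Lsum k j))) with hDdef
  have hD0 : 0 < D := by
    rw [hDdef, Finset.lt_inf'_iff]
    intro i hi
    rw [Finset.mem_Icc] at hi
    exact div_pos (sub_pos.2 (hdCpos i hi.1 hi.2)) (hdenom i hi.1 hi.2)
  have hdCr : dC ^ r = D := by
    rw [hdC, ← Real.rpow_mul hD0.le, one_div_mul_cancel (ne_of_gt hr), Real.rpow_one]
  have htD : x ^ r < D := by
    have h1 : x ^ r < dC ^ r := Real.rpow_lt_rpow hx0.le hxd hr
    rwa [hdCr] at h1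
  have ht : ∀ j, 1 ≤ j → j ≤ m →
      x ^ r * (a * k j + b * Lsum k j) < a * k j - b * Usum k m j := by
    intro j h1 h2
    have hle : D ≤ (a * k j - b * Usum k m j) / (a * k j + b * Lsum k j) := by
      rw [hDdef]
      exact Finset.inf'_le _ (Finset.mem_Icc.mpr ⟨h1, h2⟩)
    have h3 : x ^ r < (a * k j - b * Usum k m j) / (a * k j + b * Lsum k j) :=
      lt_of_lt_of_le htD hle
    exact (lt_div_iff₀ (hdenom j h1 h2)).mp h3
  have hmain := fun n hn => mg_key f a b r ε m k x ha hb hr hε hε1 hf hm hkmono hkpos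
    hx0 hxε ht n hn
  refine ⟨fun n hn => (hmain n hn).2, ?_⟩
  have hwpos : ∀ n, 1 ≤ n → 0 < mgTerm k f m n x :=
    fun n hn => mgTerm_pos f a b r ε m k x ha hε1 hf hm hkmono hkpos hx0 hxε n hn
  have hsumw : Summable (fun n => mgTerm k f m (n + 1) x) := by
    have h2 := (hmain 1 le_rfl).1
    have h3 : Summable fun i => mgTerm k f m (i + 1 + 1) x :=
      h2.congr (fun i => by congr 1; omega)
    exact (summable_nat_add_iff 1).mp h3
  have htailw : ∀ n, 1 ≤ n → (∑' i, mgTerm k f m (n + 1 + i) x) < mgTerm k f m n x :=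
    fun n hn => (hmain n hn).2
  obtain ⟨h1⟩ := kakeya_homeo (z := fun n => mgTerm k f m n x) hwpos hsumw htailw
  obtain ⟨h2⟩ := kakeya_homeo czt_pos czt_summable czt_tail
  exact ⟨h1.symm.trans (h2.trans (Homeomorph.setCongr subsums_czt_eq_cantor))⟩
end

section
/- For x ∈ (0,ε) and any n ≥ 1: ∑_{ℓ>n} w_ℓ(x) ≤ b·x^{⌊(m+n−1)/m⌋·r}·(U_{g(n)} + K·x^r/(1−x^r)) and w_n(x) ≥ a·k_{g(n)}·x^{⌊(m+n−1)/m⌋·r}, where U_j = k_{j+1}+...+k_m and K = ∑ k_i. -/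
open Set Finset

set_option maxHeartbeats 1000000 in
/-- Key tail estimates: for `x ∈ (0,ε)` and `n ≥ 1`,
`∑_{ℓ>n} w_ℓ(x) ≤ b·x^{⌊(m+n-1)/m⌋·r}·(U_{g(n)} + K·xʳ/(1−xʳ))` and
`w_n(x) ≥ a·k_{g(n)}·x^{⌊(m+n-1)/m⌋·r}`. -/
theorem stmt_19 (f : ℝ → ℝ) (a b r ε : ℝ) (ha : 0 < a) (hb : 0 < b) (hr : 0 < r)
    (hε : 0 < ε) (hε1 : ε < 1)
    (hmono : MonotoneOn f (Set.Icc 0 ε))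
    (hf : ∀ x ∈ Set.Icc (0:ℝ) ε, a * x ^ r ≤ f x ∧ f x ≤ b * x ^ r)
    (m : ℕ) (hm : 1 ≤ m) (k : ℕ → ℝ)
    (hkmono : ∀ i j, 1 ≤ i → i ≤ j → j ≤ m → k j ≤ k i)
    (hkpos : 0 < k m) :
    ∀ x : ℝ, 0 < x → x < ε → ∀ n : ℕ, 1 ≤ n →
      (∑' j : ℕ, mgTerm k f m (n + 1 + j) x) ≤
        b * x ^ ((((m + n - 1) / m : ℕ) : ℝ) * r) *
          (Usum k m (mgIdx m n) + Ksum k m * x ^ r / (1 - x ^ r)) ∧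
      a * k (mgIdx m n) * x ^ ((((m + n - 1) / m : ℕ) : ℝ) * r) ≤ mgTerm k f m n x := by
  intro x hx0 hxε n hn
  have hm0 : 0 < m := hm
  haveI : NeZero m := ⟨hm0.ne'⟩
  have hx1 : x < 1 := hxε.trans hε1
  have hxr0 : (0:ℝ) < x ^ r := Real.rpow_pos_of_pos hx0 r
  have hxr1 : x ^ r < 1 := Real.rpow_lt_one hx0.le hx1 hr
  have hdenom : (0:ℝ) < 1 - x ^ r := by linarith
  have hdom : ∀ q : ℕ, 1 ≤ q → x ^ q ∈ Set.Icc (0:ℝ) ε := by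
    intro q hq
    refine ⟨by positivity, ?_⟩
    calc x ^ q ≤ x ^ 1 := pow_le_pow_of_le_one hx0.le hx1.le hq
      _ = x := pow_one x
      _ ≤ ε := hxε.le
  have hpow_rpow : ∀ q : ℕ, (x ^ q) ^ r = x ^ ((q : ℝ) * r) := by
    intro q
    rw [← Real.rpow_natCast x q, ← Real.rpow_mul hx0.le]
  have hrpos : ∀ q : ℕ, (0:ℝ) < x ^ ((q : ℝ) * r) := fun q => Real.rpow_pos_of_pos hx0 _
  have hk0 : ∀ i, 1 ≤ i → i ≤ m → 0 < k i := fun i h1 h2 =>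
    hkpos.trans_le (hkmono i m h1 h2 le_rfl)
  have hgmem : ∀ ℓ : ℕ, 1 ≤ mgIdx m ℓ ∧ mgIdx m ℓ ≤ m := by
    intro ℓ
    have := Nat.mod_lt (ℓ - 1) hm0
    unfold mgIdx; omega
  have hdivp : ∀ ℓ : ℕ, 1 ≤ ℓ → (m + ℓ - 1) / m = (ℓ - 1) / m + 1 := by
    intro ℓ hℓ
    have h1 : m + ℓ - 1 = (ℓ - 1) + m := by omega
    rw [h1, Nat.add_div_right _ hm0]
  have hub : ∀ ℓ : ℕ, 1 ≤ ℓ →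
      mgTerm k f m ℓ x ≤ b * k (mgIdx m ℓ) * x ^ ((((m + ℓ - 1) / m : ℕ) : ℝ) * r) := by
    intro ℓ hℓ
    have hq1 : 1 ≤ (m + ℓ - 1) / m := by rw [hdivp ℓ hℓ]; exact Nat.le_add_left 1 _
    have hfu := (hf _ (hdom _ hq1)).2
    have hk := (hk0 (mgIdx m ℓ) (hgmem ℓ).1 (hgmem ℓ).2).le
    calc mgTerm k f m ℓ x = k (mgIdx m ℓ) * f (x ^ ((m + ℓ - 1) / m)) := rfl
      _ ≤ k (mgIdx m ℓ) * (b * (x ^ ((m + ℓ - 1) / m)) ^ r) :=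
          mul_le_mul_of_nonneg_left hfu hk
      _ = b * k (mgIdx m ℓ) * x ^ ((((m + ℓ - 1) / m : ℕ) : ℝ) * r) := by
          rw [hpow_rpow]; ring
  have hlb : ∀ ℓ : ℕ, 1 ≤ ℓ →
      a * k (mgIdx m ℓ) * x ^ ((((m + ℓ - 1) / m : ℕ) : ℝ) * r) ≤ mgTerm k f m ℓ x := by
    intro ℓ hℓ
    have hq1 : 1 ≤ (m + ℓ - 1) / m := by rw [hdivp ℓ hℓ]; exact Nat.le_add_left 1 _
    have hfl := (hf _ (hdom _ hq1)).1
    have hk := (hk0 (mgIdx m ℓ) (hgmem ℓ).1 (hgmem ℓ).2).le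
    calc a * k (mgIdx m ℓ) * x ^ ((((m + ℓ - 1) / m : ℕ) : ℝ) * r)
        = k (mgIdx m ℓ) * (a * (x ^ ((m + ℓ - 1) / m)) ^ r) := by rw [hpow_rpow]; ring
      _ ≤ k (mgIdx m ℓ) * f (x ^ ((m + ℓ - 1) / m)) := mul_le_mul_of_nonneg_left hfl hk
      _ = mgTerm k f m ℓ x := rfl
  have hterm_nonneg : ∀ ℓ : ℕ, 1 ≤ ℓ → 0 ≤ mgTerm k f m ℓ x := by
    intro ℓ hℓ
    refine le_trans ?_ (hlb ℓ hℓ)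
    have h1 := hk0 (mgIdx m ℓ) (hgmem ℓ).1 (hgmem ℓ).2
    have h2 := hrpos ((m + ℓ - 1) / m)
    positivity
  refine ⟨?_, hlb n hn⟩
  -- notation
  set d : ℕ := (n - 1) / m with hd_def
  set e0 : ℕ := (n - 1) % m with he0_def
  have hde : m * d + e0 = n - 1 := Nat.div_add_mod (n - 1) m
  have he0m : e0 < m := Nat.mod_lt _ hm0
  set q : ℕ := m - 1 - e0 with hq_def
  have hpn : (m + n - 1) / m = d + 1 := by rw [hdivp n hn]
  have hgn : mgIdx m n = 1 + e0 := rfl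
  have hidx1 : ∀ j : ℕ, j < q →
      mgIdx m (n + 1 + j) = e0 + 2 + j ∧ (m + (n + 1 + j) - 1) / m = d + 1 := by
    intro j hj
    have h1 : n + 1 + j - 1 = m * d + (e0 + 1 + j) := by omega
    have h2 : e0 + 1 + j < m := by omega
    constructor
    · unfold mgIdx
      rw [h1, Nat.mul_add_mod, Nat.mod_eq_of_lt h2]
      omega
    · rw [hdivp _ (by omega), h1, Nat.mul_add_div hm0, Nat.div_eq_of_lt h2]
  have hidx2 : ∀ t i : ℕ, i < m →
      mgIdx m (n + 1 + q + (t * m + i)) = 1 + i ∧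
      (m + (n + 1 + q + (t * m + i)) - 1) / m = d + 2 + t := by
    intro t i hi
    have hmm : m * (d + 1 + t) = m * d + m + t * m := by ring
    have h1 : n + 1 + q + (t * m + i) - 1 = m * (d + 1 + t) + i := by omega
    constructor
    · unfold mgIdx
      rw [h1, Nat.mul_add_mod, Nat.mod_eq_of_lt hi]
    · rw [hdivp _ (by omega), h1, Nat.mul_add_div hm0, Nat.div_eq_of_lt hi]
      omega
  set w : ℝ := x ^ r with hw_def
  have hw0 : 0 ≤ w := hxr0.le
  set C : ℕ → ℝ := fun i => b * k (1 + i) * x ^ (((d + 2 : ℕ) : ℝ) * r) with hC_def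
  have hCpos : ∀ i : ℕ, i < m → 0 < C i := by
    intro i hi
    have h1 := hk0 (1 + i) (by omega) (by omega)
    have h2 := hrpos (d + 2)
    simp only [hC_def]
    positivity
  set G : ℕ × Fin m → ℝ := fun ti => w ^ ti.1 * C ti.2 with hG_def
  have hGsum : Summable G := by
    have h := Summable.mul_of_nonneg (f := fun t : ℕ => w ^ t) (g := fun i : Fin m => C i)
      (summable_geometric_of_lt_one hw0 hxr1) Summable.of_finite
      (fun t => by positivity) (fun i => (hCpos i i.isLt).le)
    exact h
  have hsplit : ∀ t : ℕ, x ^ (((d + 2 + t : ℕ) : ℝ) * r)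
      = x ^ (((d + 2 : ℕ) : ℝ) * r) * w ^ t := by
    intro t
    have h1 : ((d + 2 + t : ℕ) : ℝ) * r = ((d + 2 : ℕ) : ℝ) * r + r * (t : ℕ) := by
      push_cast; ring
    rw [h1, Real.rpow_add hx0]
    congr 1
    rw [Real.rpow_mul hx0.le, ← hw_def, Real.rpow_natCast]
  set M : ℕ → ℝ := fun s => w ^ (s / m) * C (s % m) with hM_def
  have hMeq : ∀ s : ℕ, G ((Nat.divModEquiv m) s) = M s := by
    intro s
    simp only [Nat.divModEquiv_apply, hG_def, hM_def, Fin.val_natCast, Fin.val_ofNat]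
  have hMsum : Summable M := by
    have h := (Nat.divModEquiv m).summable_iff.mpr hGsum
    exact h.congr hMeq
  have hTM : ∀ s : ℕ, mgTerm k f m (n + 1 + q + s) x ≤ M s := by
    intro s
    obtain ⟨h1, h2⟩ := hidx2 (s / m) (s % m) (Nat.mod_lt s hm0)
    have hs : s / m * m + s % m = s := Nat.div_add_mod' s m
    rw [hs] at h1 h2
    calc mgTerm k f m (n + 1 + q + s) x
        ≤ b * k (mgIdx m (n + 1 + q + s)) *
            x ^ ((((m + (n + 1 + q + s) - 1) / m : ℕ) : ℝ) * r) := hub _ (by omega)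
      _ = M s := by
          rw [h1, h2, hsplit (s / m)]
          simp only [hM_def, hC_def]
          ring
  -- sum of the majorant
  have hKsum_range : Ksum k m = ∑ i ∈ Finset.range m, k (1 + i) := by
    rw [Ksum, ← Finset.Ico_add_one_right_eq_Icc, Finset.sum_Ico_eq_sum_range]
    simp
  have htsumM : ∑' s, M s = b * x ^ (((d + 2 : ℕ) : ℝ) * r) * Ksum k m * (1 - w)⁻¹ := by
    have h0 : ∑' s, M s = ∑' ti, G ti := by
      rw [← (Nat.divModEquiv m).tsum_eq G]
      exact tsum_congr hMeq
    rw [h0, hGsum.tsum_prod' (fun t => Summable.of_finite)]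
    have h1 : ∀ t : ℕ, ∑' i : Fin m, G (t, i) = w ^ t * ∑ i ∈ Finset.range m, C i := by
      intro t
      rw [tsum_fintype]
      simp only [hG_def]
      rw [← Finset.mul_sum]
      congr 1
      exact Fin.sum_univ_eq_sum_range (fun i => C i) m
    have hC : ∑ i ∈ Finset.range m, C i = b * x ^ (((d + 2 : ℕ) : ℝ) * r) * Ksum k m := by
      rw [hKsum_range, Finset.mul_sum]
      exact Finset.sum_congr rfl fun i _ => by simp only [hC_def]; ring
    calc ∑' (t : ℕ) (i : Fin m), G (t, i)
        = ∑' t : ℕ, w ^ t * ∑ i ∈ Finset.range m, C i := tsum_congr h1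
      _ = (∑' t : ℕ, w ^ t) * ∑ i ∈ Finset.range m, C i := tsum_mul_right
      _ = (1 - w)⁻¹ * ∑ i ∈ Finset.range m, C i := by
          rw [tsum_geometric_of_lt_one hw0 hxr1]
      _ = b * x ^ (((d + 2 : ℕ) : ℝ) * r) * Ksum k m * (1 - w)⁻¹ := by rw [hC]; ring
  -- summability of the full series
  have hF_shift : ∀ j : ℕ, mgTerm k f m (n + 1 + (j + q)) x = mgTerm k f m (n + 1 + q + j) x := by
    intro j
    congr 1
    omega
  have hFsum : Summable (fun j => mgTerm k f m (n + 1 + j) x) := by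
    rw [← summable_nat_add_iff q]
    refine Summable.of_nonneg_of_le (fun j => hterm_nonneg _ (by omega)) (fun j => ?_) hMsum
    rw [hF_shift j]
    exact hTM j
  have hsum_split := hFsum.sum_add_tsum_nat_add q
  -- bound on the in-block part
  have hUsum_range : Usum k m (mgIdx m n) = ∑ j ∈ Finset.range q, k (e0 + 2 + j) := by
    rw [Usum, hgn, ← Finset.Ico_add_one_right_eq_Icc, Finset.sum_Ico_eq_sum_range]
    have hq' : m + 1 - (1 + e0 + 1) = q := by omega
    rw [hq']
    exact Finset.sum_congr rfl fun j _ => by congr 1; omega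
  have hA : ∑ j ∈ Finset.range q, mgTerm k f m (n + 1 + j) x
      ≤ b * x ^ (((d + 1 : ℕ) : ℝ) * r) * Usum k m (mgIdx m n) := by
    calc ∑ j ∈ Finset.range q, mgTerm k f m (n + 1 + j) x
        ≤ ∑ j ∈ Finset.range q, b * k (e0 + 2 + j) * x ^ (((d + 1 : ℕ) : ℝ) * r) := by
          refine Finset.sum_le_sum fun j hj => ?_
          obtain ⟨h1, h2⟩ := hidx1 j (Finset.mem_range.mp hj)
          have h3 := hub (n + 1 + j) (by omega)
          rwa [h1, h2] at h3
      _ = b * x ^ (((d + 1 : ℕ) : ℝ) * r) * Usum k m (mgIdx m n) := by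
          rw [hUsum_range, Finset.mul_sum]
          exact Finset.sum_congr rfl fun j _ => by ring
  -- bound on the tail part
  have hB : ∑' j, mgTerm k f m (n + 1 + (j + q)) x
      ≤ b * x ^ (((d + 2 : ℕ) : ℝ) * r) * Ksum k m * (1 - w)⁻¹ := by
    rw [← htsumM]
    refine Summable.tsum_le_tsum (fun j => ?_) ?_ hMsum
    · rw [hF_shift j]; exact hTM j
    · rw [← summable_nat_add_iff q] at hFsum
      exact hFsum
  -- combine
  have hX : x ^ (((d + 2 : ℕ) : ℝ) * r) = x ^ (((d + 1 : ℕ) : ℝ) * r) * w := by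
    have h1 : ((d + 2 : ℕ) : ℝ) * r = ((d + 1 : ℕ) : ℝ) * r + r := by push_cast; ring
    rw [h1, Real.rpow_add hx0]
  rw [hpn]
  calc ∑' j : ℕ, mgTerm k f m (n + 1 + j) x
      = (∑ j ∈ Finset.range q, mgTerm k f m (n + 1 + j) x)
        + ∑' j, mgTerm k f m (n + 1 + (j + q)) x := hsum_split.symm
    _ ≤ b * x ^ (((d + 1 : ℕ) : ℝ) * r) * Usum k m (mgIdx m n)
        + b * x ^ (((d + 2 : ℕ) : ℝ) * r) * Ksum k m * (1 - w)⁻¹ := add_le_add hA hB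
    _ = b * x ^ (((d + 1 : ℕ) : ℝ) * r) *
        (Usum k m (mgIdx m n) + Ksum k m * w / (1 - w)) := by
          rw [hX, div_eq_mul_inv]
          ring
end
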